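/- Let H be an Nt × Nr complex matrix admitting a decomposition H = U · diag(μ) · Vᴴ, where V is an Nr × Nr unitary matrix, U is an Nt × Nr complex matrix whose columns each have Euclidean norm 1, and μ : Fin Nr → ℝ with μᵢ ≥ 0 for all i. Suppose Ns ≤ Np ≤ Nr and Ep > 0. Then there exist a real number α > 0 and an Nr × Np complex matrix P with Tr(P Pᴴ) ≤ Ep (entrywise real part of the trace at most Ep) such that for every i ∈ Fin Np the i-th column of H·P equals α·μᵢ times the i-th column of U; consequently, for every i with μᵢ > 0, the i-th column of U equals the i-th column of H·P divided by its Euclidean norm, and μᵢ equals that norm divided by α. -/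

import Mathlib

open Matrix

/-- Euclidean norm of the `i`-th column of a matrix. -/
noncomputable def colNorm {m n : ℕ} (M : Matrix (Fin m) (Fin n) ℂ) (i : Fin n) : ℝ :=
  Real.sqrt (∑ j, Complex.normSq (M j i))

lemma colNorm_smul_col {m n : ℕ} (M N : Matrix (Fin m) (Fin n) ℂ) (i : Fin n)
    (c : ℝ) (hc : 0 ≤ c) (h : ∀ j, M j i = (c : ℂ) * N j i) :
    colNorm M i = c * colNorm N i := by
  unfold colNorm
  have : ∑ j, Complex.normSq (M j i) = c ^ 2 * ∑ j, Complex.normSq (N j i) := by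
    rw [Finset.mul_sum]
    refine Finset.sum_congr rfl fun j _ => ?_
    rw [h j, Complex.normSq_mul, Complex.normSq_ofReal]
    ring
  rw [this, Real.sqrt_mul (by positivity), Real.sqrt_sq hc]

/-- Proposition 1: existence of a channel-adaptive pilot matrix `P` satisfying the
power constraint from which the left singular vectors and singular values of the
channel can be recovered from the noiseless feedback `H * P`. -/
theorem prop1 (Nt Nr Np Ns : ℕ) (hNs : Ns ≤ Np) (hNp : Np ≤ Nr)
    (Ep : ℝ) (hEp : 0 < Ep)
    (H U : Matrix (Fin Nt) (Fin Nr) ℂ)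
    (V : Matrix (Fin Nr) (Fin Nr) ℂ) (μ : Fin Nr → ℝ)
    (hμ : ∀ i, 0 ≤ μ i)
    (hV : V ∈ Matrix.unitaryGroup (Fin Nr) ℂ)
    (hU : ∀ i, colNorm U i = 1)
    (hH : H = U * Matrix.diagonal (fun i => (μ i : ℂ)) * Vᴴ) :
    ∃ (α : ℝ) (P : Matrix (Fin Nr) (Fin Np) ℂ), 0 < α ∧
      ((P * Pᴴ).trace).re ≤ Ep ∧
      (∀ i : Fin Np, ∀ j : Fin Nt,
        (H * P) j i = (α * μ (Fin.castLE hNp i) : ℂ) * U j (Fin.castLE hNp i)) ∧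
      (∀ i : Fin Np, 0 < μ (Fin.castLE hNp i) →
        (∀ j : Fin Nt,
          U j (Fin.castLE hNp i) = (H * P) j i / (colNorm (H * P) i : ℂ)) ∧
        μ (Fin.castLE hNp i) = colNorm (H * P) i / α) := by
  set α : ℝ := Real.sqrt (Ep / (Np + 1)) with hα
  have hαpos : 0 < α := Real.sqrt_pos.mpr (by positivity)
  set P : Matrix (Fin Nr) (Fin Np) ℂ :=
    fun k i => (α : ℂ) * V k (Fin.castLE hNp i) with hP
  -- unitarity: star V * V = 1
  have hVu : Vᴴ * V = 1 := hV.1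
  -- column norms of V
  have hVcol : ∀ i' : Fin Nr, ∑ k, Complex.normSq (V k i') = 1 := by
    intro i'
    have := congrFun (congrFun hVu i') i'
    simp only [Matrix.mul_apply, Matrix.conjTranspose_apply, Matrix.one_apply_eq] at this
    have : (∑ k, (starRingEnd ℂ) (V k i') * V k i') = 1 := this
    have h2 : (∑ k, ((Complex.normSq (V k i') : ℂ))) = 1 := by
      rw [← this]
      exact Finset.sum_congr rfl fun k _ => by
        rw [Complex.normSq_eq_conj_mul_self]
    have := congrArg Complex.re h2
    simpa [Complex.ofReal_sum] using this
  -- key multiplication fact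
  have hmul : ∀ (i : Fin Np) (j : Fin Nt),
      (H * P) j i = (α * μ (Fin.castLE hNp i) : ℂ) * U j (Fin.castLE hNp i) := by
    intro i j
    have hHV : H * V = U * Matrix.diagonal (fun i => (μ i : ℂ)) := by
      rw [hH, Matrix.mul_assoc, hVu, Matrix.mul_one]
    have h1 : (H * P) j i = (α : ℂ) * (H * V) j (Fin.castLE hNp i) := by
      simp only [Matrix.mul_apply]
      simp only [hP, Finset.mul_sum]
      exact Finset.sum_congr rfl fun k _ => by ring
    rw [h1, hHV]
    simp [Matrix.mul_apply, Matrix.diagonal, Finset.sum_ite_eq, Complex.ofReal_mul]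
    ring
  refine ⟨α, P, hαpos, ?_, hmul, ?_⟩
  · -- trace bound
    have htr : ((P * Pᴴ).trace) = ((α ^ 2 * Np : ℝ) : ℂ) := by
      rw [Matrix.trace]
      have : ∀ k : Fin Nr, (P * Pᴴ) k k =
          ((α ^ 2 : ℝ) : ℂ) * ∑ i : Fin Np, (Complex.normSq (V k (Fin.castLE hNp i)) : ℂ) := by
        intro k
        simp only [Matrix.mul_apply, Matrix.conjTranspose_apply]
        simp only [hP, Finset.mul_sum]
        refine Finset.sum_congr rfl fun i _ => ?_
        rw [Complex.normSq_eq_conj_mul_self]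
        push_cast
        simp [Complex.conj_ofReal]
        ring
      calc ∑ k, (P * Pᴴ) k k
          = ((α ^ 2 : ℝ) : ℂ) * ∑ k, ∑ i : Fin Np,
              (Complex.normSq (V k (Fin.castLE hNp i)) : ℂ) := by
            rw [Finset.mul_sum]; exact Finset.sum_congr rfl fun k _ => this k
        _ = ((α ^ 2 : ℝ) : ℂ) * ∑ i : Fin Np, ∑ k,
              (Complex.normSq (V k (Fin.castLE hNp i)) : ℂ) := by
            rw [Finset.sum_comm]
        _ = ((α ^ 2 * Np : ℝ) : ℂ) := by
            have : ∀ i : Fin Np, (∑ k, (Complex.normSq (V k (Fin.castLE hNp i)) : ℂ)) = 1 := by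
              intro i
              have := hVcol (Fin.castLE hNp i)
              exact_mod_cast congrArg (Complex.ofReal) this
            simp only [this, Finset.sum_const, Finset.card_fin, nsmul_eq_mul, mul_one]
            push_cast
            ring
    rw [htr]
    have hα2 : α ^ 2 = Ep / (Np + 1) := Real.sq_sqrt (by positivity)
    simp only [Complex.ofReal_re]
    rw [hα2]
    rw [div_mul_eq_mul_div, div_le_iff₀ (by positivity)]
    nlinarith [hEp.le]
  · intro i hμi
    set i' := Fin.castLE hNp i
    have hcol : colNorm (H * P) i = α * μ i' := by
      have := colNorm_smul_col (H * P) (fun j k => U j (Fin.castLE hNp k)) i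
        (α * μ i') (by positivity) (fun j => by push_cast [hmul i j]; ring)
      rw [this]
      have : colNorm (fun j k => U j (Fin.castLE hNp k)) i = colNorm U i' := rfl
      rw [this, hU i', mul_one]
    have hpos : 0 < α * μ i' := by positivity
    constructor
    · intro j
      rw [hmul i j, hcol]
      have h1 : ((α : ℂ)) ≠ 0 := by exact_mod_cast hαpos.ne'
      have h2 : ((μ i' : ℝ) : ℂ) ≠ 0 := by exact_mod_cast hμi.ne'
      push_cast
      field_simp
      exact mul_comm _ _
    · rw [hcol, mul_comm, mul_div_assoc, div_self hαpos.ne', mul_one]
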